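/- Assume a = a(ρ) ∈ (0, 1] and that the deviation angle satisfies |α_c| < π(1/a − 2). Let f₀ be any positive Borel measure on I of total mass ρ > 0 and assume that for every θ ∈ I the characteristic t ↦ γ_t(θ) is a C¹ solution taking values in I. Then the solution f(t) = γ_t # f₀ of the mean-field equation satisfies ∫_I |θ − α_d| f(t)(dθ) = ∫_I |γ_t(θ) − α_d| f₀(dθ) → 0 as t → +∞; that is, f(t) converges to the aligned state ρδ_{α_d} (in first moment, hence in 1-Wasserstein distance). -/

import Mathlib

open MeasureTheory Real Filter
open scoped Real

/-- The angular collision-probability profile `𝒢(s) = (1/π)·min{s, 2π−s}`. -/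
noncomputable def Gfun (s : ℝ) : ℝ := (1 / π) * min s (2 * π - s)

lemma Gfun_repr (s : ℝ) : Gfun s = (π - |s - π|) / π := by
  unfold Gfun
  rcases le_total s π with h | h
  · rw [min_eq_left (by linarith), abs_of_nonpos (by linarith)]; ring
  · rw [min_eq_right (by linarith), abs_of_nonneg (by linarith)]; ring

lemma Gfun_le_one (s : ℝ) : Gfun s ≤ 1 := by
  have hπ := Real.pi_pos
  rw [Gfun_repr, div_le_one hπ]
  have := abs_nonneg (s - π); linarith

lemma Gfun_nonneg {s : ℝ} (h0 : 0 ≤ s) (h2 : s ≤ 2 * π) : 0 ≤ Gfun s := by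
  have hπ := Real.pi_pos
  rw [Gfun_repr]
  apply div_nonneg _ hπ.le
  rw [sub_nonneg, abs_le]
  constructor <;> linarith

lemma Gfun_le (s : ℝ) : Gfun s ≤ s / π := by
  have hπ := Real.pi_pos
  unfold Gfun
  have h1 : (0:ℝ) ≤ 1 / π := by positivity
  calc (1 / π) * min s (2 * π - s) ≤ (1 / π) * s :=
        mul_le_mul_of_nonneg_left (min_le_left _ _) h1
    _ = s / π := by ring

lemma Gfun_lip (s u : ℝ) : |Gfun s - Gfun u| ≤ |s - u| / π := by
  have hπ := Real.pi_pos
  rw [Gfun_repr, Gfun_repr, div_sub_div_same, abs_div, abs_of_pos hπ,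
    div_le_div_iff_of_pos_right hπ]
  have h1 : π - |s - π| - (π - |u - π|) = |u - π| - |s - π| := by ring
  rw [h1]
  refine le_trans (abs_abs_sub_abs_le_abs_sub _ _) ?_
  rw [show u - π - (s - π) = u - s by ring, abs_sub_comm]

set_option maxHeartbeats 1000000 in
/-- If `|α_c| < π(1/a − 2)` then the solution `f(t) = γ_t # f₀` of the mean-field equation
aligns to the desired direction in first moment:
`∫_I |θ − α_d| f(t)(dθ) = ∫_I |γ_t(θ) − α_d| f₀(dθ) → 0` as `t → +∞`. -/
theorem stmt_8 (αd αc : ℝ) (hαd : αd ∈ Set.Ico (-π) π) (hαc : αc ∈ Set.Ico (-π) π)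
    (ρ a : ℝ) (hρ : 0 < ρ) (hρ1 : ρ ≤ 1) (ha : 0 < a) (ha1 : a ≤ 1)
    (hcond : |αc| < π * (1 / a - 2))
    (f₀ : Measure ℝ)
    (hsupp : f₀ (Set.Ico (-π + αd) (π + αd))ᶜ = 0)
    (hmass : f₀ Set.univ = ENNReal.ofReal ρ)
    (γ : ℝ → ℝ → ℝ)
    (hmeas : ∀ t, Measurable (γ t))
    (hval : ∀ θ ∈ Set.Ico (-π + αd) (π + αd), ∀ t, 0 ≤ t →
      γ t θ ∈ Set.Ico (-π + αd) (π + αd))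
    (hinit : ∀ θ ∈ Set.Ico (-π + αd) (π + αd), γ 0 θ = θ)
    -- the characteristic ODE of the mean-field model:
    (hode : ∀ θ ∈ Set.Ico (-π + αd) (π + αd), ∀ t, 0 ≤ t →
      HasDerivAt (fun s => γ s θ)
        (-ρ * (γ t θ - αd)
          + a * (γ t θ - αd + αc) * ∫ φ, Gfun |γ t θ - γ t φ| ∂f₀) t) :
    (∀ t, 0 ≤ t →
      ∫ θ, |θ - αd| ∂(Measure.map (γ t) f₀) = ∫ θ, |γ t θ - αd| ∂f₀) ∧
    Tendsto (fun t => ∫ θ, |γ t θ - αd| ∂f₀) atTop (nhds 0) := by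
  have hπ : (0:ℝ) < π := Real.pi_pos
  haveI hfin : IsFiniteMeasure f₀ := ⟨by rw [hmass]; exact ENNReal.ofReal_lt_top⟩
  have hmassr : (f₀ Set.univ).toReal = ρ := by rw [hmass, ENNReal.toReal_ofReal hρ.le]
  have haeI : ∀ᵐ φ ∂f₀, φ ∈ Set.Ico (-π + αd) (π + αd) := by
    rw [MeasureTheory.ae_iff]
    convert hsupp using 2
    rfl
  set c : ℝ := |αc| with hcdef
  have hc0 : 0 ≤ c := abs_nonneg _
  have hkey : a * (2 * π + c) < π := by
    have h1 : a * |αc| < a * (π * (1 / a - 2)) := mul_lt_mul_of_pos_left hcond ha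
    have h2 : a * (π * (1 / a - 2)) = π - 2 * a * π := by
      field_simp
    rw [h2] at h1
    rw [← hcdef] at h1
    nlinarith
  set lam : ℝ := ρ * ((π - a * (2 * π + c)) / π) with hlamdef
  have hlam0 : 0 < lam := mul_pos hρ (div_pos (by linarith) hπ)
  have hlamρ : lam ≤ ρ := by
    have h1 : (π - a * (2 * π + c)) / π ≤ 1 := by
      rw [div_le_one hπ]; nlinarith
    nlinarith
  -- abbreviation for the interaction integral
  set J : ℝ → ℝ → ℝ := fun t θ => ∫ φ, Gfun |γ t θ - γ t φ| ∂f₀ with hJdef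
  have hode' : ∀ θ ∈ Set.Ico (-π + αd) (π + αd), ∀ t, 0 ≤ t →
      HasDerivAt (fun s => γ s θ)
        (-ρ * (γ t θ - αd) + a * (γ t θ - αd + αc) * J t θ) t := hode
  -- basic bounds
  have hx : ∀ θ ∈ Set.Ico (-π + αd) (π + αd), ∀ t, 0 ≤ t → |γ t θ - αd| ≤ π := by
    intro θ hθ t ht
    have h1 := hval θ hθ t ht
    rw [Set.mem_Ico] at h1
    rw [abs_le]; constructor <;> [linarith [h1.1]; linarith [h1.2]]
  have hdist2π : ∀ θ ∈ Set.Ico (-π + αd) (π + αd), ∀ φ ∈ Set.Ico (-π + αd) (π + αd),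
      ∀ t, 0 ≤ t → |γ t θ - γ t φ| ≤ 2 * π := by
    intro θ hθ φ hφ t ht
    have h1 := hval θ hθ t ht
    have h2 := hval φ hφ t ht
    rw [Set.mem_Ico] at h1 h2
    rw [abs_sub_le_iff]
    constructor <;> [linarith [h1.2, h2.1]; linarith [h2.2, h1.1]]
  have hGmeas : ∀ t θ0, Measurable fun φ => Gfun |γ t θ0 - γ t φ| := by
    intro t θ0
    have hc : Continuous Gfun :=
      continuous_const.mul (continuous_id.min (continuous_const.sub continuous_id))
    exact hc.measurable.comp ((measurable_const.sub (hmeas t)).abs)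
  have hGint : ∀ t, 0 ≤ t → ∀ θ0 ∈ Set.Ico (-π + αd) (π + αd),
      Integrable (fun φ => Gfun |γ t θ0 - γ t φ|) f₀ := by
    intro t ht θ0 hθ0
    refine (integrable_const (1:ℝ)).mono' (hGmeas t θ0).aestronglyMeasurable ?_
    filter_upwards [haeI] with φ hφ
    rw [Real.norm_eq_abs, abs_le]
    refine ⟨?_, Gfun_le_one _⟩
    have := Gfun_nonneg (abs_nonneg (γ t θ0 - γ t φ)) (hdist2π θ0 hθ0 φ hφ t ht)
    linarith
  have hJ_le : ∀ t, 0 ≤ t → ∀ θ0 ∈ Set.Ico (-π + αd) (π + αd), J t θ0 ≤ ρ := by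
    intro t ht θ0 hθ0
    have h1 : J t θ0 ≤ ∫ _φ, (1:ℝ) ∂f₀ := by
      apply integral_mono_ae (hGint t ht θ0 hθ0) (integrable_const 1)
      filter_upwards [haeI] with φ _ using Gfun_le_one _
    rwa [integral_const, measureReal_def, hmassr, smul_eq_mul, mul_one] at h1
  have hJ_nonneg : ∀ t, 0 ≤ t → ∀ θ0 ∈ Set.Ico (-π + αd) (π + αd), 0 ≤ J t θ0 := by
    intro t ht θ0 hθ0
    apply integral_nonneg_of_ae
    filter_upwards [haeI] with φ hφ
    exact Gfun_nonneg (abs_nonneg _) (hdist2π θ0 hθ0 φ hφ t ht)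
  have hJ_lip : ∀ t, 0 ≤ t → ∀ θ0 ∈ Set.Ico (-π + αd) (π + αd),
      ∀ φ0 ∈ Set.Ico (-π + αd) (π + αd),
      |J t θ0 - J t φ0| ≤ ρ / π * |γ t θ0 - γ t φ0| := by
    intro t ht θ0 hθ0 φ0 hφ0
    have hint1 := hGint t ht θ0 hθ0
    have hint2 := hGint t ht φ0 hφ0
    have heq : J t θ0 - J t φ0 =
        ∫ φ, (Gfun |γ t θ0 - γ t φ| - Gfun |γ t φ0 - γ t φ|) ∂f₀ :=
      (integral_sub hint1 hint2).symm
    rw [heq, ← Real.norm_eq_abs]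
    refine le_trans (norm_integral_le_integral_norm _) ?_
    have h5 : ∫ φ, ‖Gfun |γ t θ0 - γ t φ| - Gfun |γ t φ0 - γ t φ|‖ ∂f₀
        ≤ ∫ _φ, |γ t θ0 - γ t φ0| / π ∂f₀ := by
      apply integral_mono ((hint1.sub hint2).norm) (integrable_const _)
      intro φ
      simp only [Pi.sub_apply, Real.norm_eq_abs]
      refine le_trans (Gfun_lip _ _) ?_
      rw [div_le_div_iff_of_pos_right hπ]
      refine le_trans (abs_abs_sub_abs_le_abs_sub _ _) ?_
      rw [show γ t θ0 - γ t φ - (γ t φ0 - γ t φ) = γ t θ0 - γ t φ0 by ring]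
    refine le_trans h5 ?_
    rw [integral_const, measureReal_def, hmassr, smul_eq_mul]
    ring_nf
    exact le_refl _
  -- pairwise contraction of characteristics
  have hpair : ∀ θ ∈ Set.Ico (-π + αd) (π + αd), ∀ φ ∈ Set.Ico (-π + αd) (π + αd),
      ∀ t, 0 ≤ t → (γ t θ - γ t φ)^2 ≤ (2*π)^2 * exp (-(2*lam)*t) := by
    intro θ hθ φ hφ t ht
    set h : ℝ → ℝ := fun s => (γ s θ - γ s φ)^2 * exp (2*lam*s) with hhdef
    have hderiv : ∀ s, 0 ≤ s → HasDerivAt h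
        ((2*(γ s θ - γ s φ) *
          ((-ρ * (γ s θ - αd) + a * (γ s θ - αd + αc) * J s θ)
            - (-ρ * (γ s φ - αd) + a * (γ s φ - αd + αc) * J s φ))
          + 2*lam*(γ s θ - γ s φ)^2) * exp (2*lam*s)) s := by
      intro s hs
      have h1 := (hode' θ hθ s hs).sub (hode' φ hφ s hs)
      have h2 : HasDerivAt (fun u => (γ u θ - γ u φ)^2)
          (2*(γ s θ - γ s φ) *
            ((-ρ * (γ s θ - αd) + a * (γ s θ - αd + αc) * J s θ)
              - (-ρ * (γ s φ - αd) + a * (γ s φ - αd + αc) * J s φ))) s := by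
        have := h1.pow 2
        norm_num at this
        refine this.congr_deriv ?_
        ring
      have h3 : HasDerivAt (fun u : ℝ => exp (2*lam*u)) (exp (2*lam*s) * (2*lam)) s := by
        simpa using ((hasDerivAt_id s).const_mul (2*lam)).exp
      have h4 := h2.mul h3
      refine h4.congr_deriv ?_
      ring
    have hanti : AntitoneOn h (Set.Ici (0:ℝ)) := by
      apply antitoneOn_of_deriv_nonpos (convex_Ici 0)
      · exact fun s hs => (hderiv s hs).continuousAt.continuousWithinAt
      · intro s hs
        rw [interior_Ici] at hs
        exact (hderiv s hs.le).differentiableAt.differentiableWithinAt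
      · intro s hs
        rw [interior_Ici] at hs
        rw [(hderiv s hs.le).deriv]
        apply mul_nonpos_of_nonpos_of_nonneg _ (Real.exp_pos _).le
        -- key estimate
        set w : ℝ := γ s θ - γ s φ with hwdef
        have hid : w * ((-ρ * (γ s θ - αd) + a * (γ s θ - αd + αc) * J s θ)
              - (-ρ * (γ s φ - αd) + a * (γ s φ - αd + αc) * J s φ))
            = -ρ * w^2 + a * w^2 * J s θ
              + a * (w * ((γ s φ - αd + αc) * (J s θ - J s φ))) := by
          rw [hwdef]; ring
        have hb1 : a * w^2 * J s θ ≤ a * w^2 * ρ := by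
          apply mul_le_mul_of_nonneg_left (hJ_le s hs.le θ hθ) (by positivity)
        have hB : |γ s φ - αd + αc| ≤ π + c := by
          calc |γ s φ - αd + αc| ≤ |γ s φ - αd| + |αc| := abs_add_le _ _
            _ ≤ π + c := by have := hx φ hφ s hs.le; rw [hcdef]; linarith
        have hq : |J s θ - J s φ| ≤ ρ / π * |w| := hJ_lip s hs.le θ hθ φ hφ
        have hb2 : w * ((γ s φ - αd + αc) * (J s θ - J s φ)) ≤ (π + c) * (ρ/π) * w^2 := by
          calc w * ((γ s φ - αd + αc) * (J s θ - J s φ))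
              ≤ |w * ((γ s φ - αd + αc) * (J s θ - J s φ))| := le_abs_self _
            _ = |w| * (|γ s φ - αd + αc| * |J s θ - J s φ|) := by
                rw [abs_mul, abs_mul]
            _ ≤ |w| * ((π + c) * (ρ/π * |w|)) := by
                apply mul_le_mul_of_nonneg_left _ (abs_nonneg _)
                apply mul_le_mul hB hq (abs_nonneg _) (by linarith)
            _ = (π + c) * (ρ/π) * (|w| * |w|) := by ring
            _ = (π + c) * (ρ/π) * w^2 := by rw [abs_mul_abs_self]; ring
        have hb2' : a * (w * ((γ s φ - αd + αc) * (J s θ - J s φ)))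
            ≤ a * ((π + c) * (ρ/π) * w^2) := mul_le_mul_of_nonneg_left hb2 ha.le
        calc 2*w * ((-ρ * (γ s θ - αd) + a * (γ s θ - αd + αc) * J s θ)
              - (-ρ * (γ s φ - αd) + a * (γ s φ - αd + αc) * J s φ)) + 2*lam*w^2
            = 2*(-ρ * w^2 + a * w^2 * J s θ
              + a * (w * ((γ s φ - αd + αc) * (J s θ - J s φ)))) + 2*lam*w^2 := by
              rw [mul_assoc 2 w, hid]
          _ ≤ 2*(-ρ * w^2 + a * w^2 * ρ + a * ((π + c) * (ρ/π) * w^2)) + 2*lam*w^2 := by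
              clear_value w J lam
              linarith [hb1, hb2']
          _ = 0 := by rw [hlamdef]; field_simp; ring
    have h0le : h t ≤ h 0 := hanti Set.self_mem_Ici ht ht
    have hh0 : h 0 = (θ - φ)^2 := by
      simp [hhdef, hinit θ hθ, hinit φ hφ]
    have hθφ : (θ - φ)^2 ≤ (2*π)^2 := by
      have h1 := hθ; have h2 := hφ
      rw [Set.mem_Ico] at h1 h2
      nlinarith [h1.1, h1.2, h2.1, h2.2]
    have hht : h t = (γ t θ - γ t φ)^2 * exp (2*lam*t) := rfl
    have hfin2 : (γ t θ - γ t φ)^2 * exp (2*lam*t) ≤ (2*π)^2 := by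
      rw [← hht]; rw [hh0] at h0le; linarith
    have hexp : (0:ℝ) < exp (-(2*lam)*t) := Real.exp_pos _
    calc (γ t θ - γ t φ)^2
        = ((γ t θ - γ t φ)^2 * exp (2*lam*t)) * exp (-(2*lam)*t) := by
          rw [mul_assoc, ← Real.exp_add]
          norm_num
      _ ≤ (2*π)^2 * exp (-(2*lam)*t) := mul_le_mul_of_nonneg_right hfin2 hexp.le
  -- uniform decay of pairwise distances
  have hdistdecay : ∀ θ ∈ Set.Ico (-π + αd) (π + αd), ∀ φ ∈ Set.Ico (-π + αd) (π + αd),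
      ∀ t, 0 ≤ t → |γ t θ - γ t φ| ≤ 2*π*exp (-lam*t) := by
    intro θ hθ φ hφ t ht
    have h1 := hpair θ hθ φ hφ t ht
    have he : exp (-lam*t) * exp (-lam*t) = exp (-(2*lam)*t) := by
      rw [← Real.exp_add]; ring_nf
    nlinarith [h1, he, abs_nonneg (γ t θ - γ t φ), Real.exp_pos (-lam*t),
      sq_abs (γ t θ - γ t φ), hπ, mul_pos hπ (Real.exp_pos (-lam*t))]
  -- decay of the interaction term
  have hJdecay : ∀ θ ∈ Set.Ico (-π + αd) (π + αd), ∀ t, 0 ≤ t →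
      J t θ ≤ 2*ρ*exp (-lam*t) := by
    intro θ hθ t ht
    have h1 : J t θ ≤ ∫ _φ, 2*exp (-lam*t) ∂f₀ := by
      apply integral_mono_ae (hGint t ht θ hθ) (integrable_const _)
      filter_upwards [haeI] with φ hφ
      calc Gfun |γ t θ - γ t φ| ≤ |γ t θ - γ t φ| / π := Gfun_le _
        _ ≤ (2*π*exp (-lam*t)) / π := by
            rw [div_le_div_iff_of_pos_right hπ]
            exact hdistdecay θ hθ φ hφ t ht
        _ = 2*exp (-lam*t) := by
            field_simp
    rw [integral_const, measureReal_def, hmassr, smul_eq_mul] at h1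
    linarith
  -- decay of individual characteristics
  set C : ℝ := 4*a*ρ*π*(π+c) with hCdef
  have hC0 : 0 ≤ C := by positivity
  have hchar : ∀ θ ∈ Set.Ico (-π + αd) (π + αd), ∀ t, 0 ≤ t →
      (γ t θ - αd)^2 ≤ (π^2 + C*t) * exp (-lam*t) := by
    intro θ hθ t ht
    set g : ℝ → ℝ := fun s => (γ s θ - αd)^2 * exp (lam*s) - C*s with hgdef
    have hderiv : ∀ s, 0 ≤ s → HasDerivAt g
        ((2*(γ s θ - αd) * (-ρ * (γ s θ - αd) + a * (γ s θ - αd + αc) * J s θ)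
          + lam*(γ s θ - αd)^2) * exp (lam*s) - C) s := by
      intro s hs
      have h1 := hode' θ hθ s hs
      have h2 : HasDerivAt (fun u => (γ u θ - αd)^2)
          (2*(γ s θ - αd) * (-ρ * (γ s θ - αd) + a * (γ s θ - αd + αc) * J s θ)) s := by
        have h2a : HasDerivAt (fun u => γ u θ - αd)
            (-ρ * (γ s θ - αd) + a * (γ s θ - αd + αc) * J s θ) s := h1.sub_const αd
        have := h2a.pow 2
        norm_num at this
        refine this.congr_deriv ?_
        ring
      have h3 : HasDerivAt (fun u : ℝ => exp (lam*u)) (exp (lam*s) * lam) s := by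
        simpa using ((hasDerivAt_id s).const_mul lam).exp
      have h4 := (h2.mul h3).sub ((hasDerivAt_id s).const_mul C)
      refine h4.congr_deriv ?_
      ring
    have hanti : AntitoneOn g (Set.Ici (0:ℝ)) := by
      apply antitoneOn_of_deriv_nonpos (convex_Ici 0)
      · exact fun s hs => (hderiv s hs).continuousAt.continuousWithinAt
      · intro s hs
        rw [interior_Ici] at hs
        exact (hderiv s hs.le).differentiableAt.differentiableWithinAt
      · intro s hs
        rw [interior_Ici] at hs
        rw [(hderiv s hs.le).deriv]
        set y : ℝ := γ s θ - αd with hydef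
        have hy : |y| ≤ π := hx θ hθ s hs.le
        have hyc : |y + αc| ≤ π + c := by
          calc |y + αc| ≤ |y| + |αc| := abs_add_le _ _
            _ ≤ π + c := by rw [hcdef]; linarith
        have hJn : 0 ≤ J s θ := hJ_nonneg s hs.le θ hθ
        have hJd : J s θ ≤ 2*ρ*exp (-lam*s) := hJdecay θ hθ s hs.le
        have hprod : y * (y + αc) ≤ π * (π + c) := by
          calc y * (y + αc) ≤ |y * (y + αc)| := le_abs_self _
            _ = |y| * |y + αc| := abs_mul _ _
            _ ≤ π * (π + c) := mul_le_mul hy hyc (abs_nonneg _) hπ.le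
        have ht1 : 2*a*(y*((y + αc) * J s θ)) ≤ 2*a*(π*(π+c)) * J s θ := by
          have := mul_le_mul_of_nonneg_right hprod hJn
          nlinarith
        have ht2 : 2*a*(π*(π+c)) * J s θ ≤ 2*a*(π*(π+c)) * (2*ρ*exp (-lam*s)) := by
          apply mul_le_mul_of_nonneg_left hJd (by positivity)
        have hsq : 0 ≤ y^2 * exp (lam*s) := by positivity
        have hee : exp (-lam*s) * exp (lam*s) = 1 := by
          rw [← Real.exp_add]; norm_num
        have hmain : (2*y*(-ρ*y + a*(y + αc)*J s θ) + lam*y^2) * exp (lam*s) ≤ C := by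
          have hb : 2*y*(-ρ*y + a*(y + αc)*J s θ) + lam*y^2
              ≤ (lam - 2*ρ)*y^2 + 4*a*ρ*π*(π+c)*exp (-lam*s) := by
            nlinarith [ht1, ht2]
          calc (2*y*(-ρ*y + a*(y + αc)*J s θ) + lam*y^2) * exp (lam*s)
              ≤ ((lam - 2*ρ)*y^2 + 4*a*ρ*π*(π+c)*exp (-lam*s)) * exp (lam*s) :=
                mul_le_mul_of_nonneg_right hb (Real.exp_pos _).le
            _ = (lam - 2*ρ)*(y^2 * exp (lam*s)) + 4*a*ρ*π*(π+c)*(exp (-lam*s) * exp (lam*s)) := by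
                ring
            _ ≤ 0 + C := by
                rw [hee, hCdef]
                have h5 : (lam - 2*ρ) * (y^2 * exp (lam*s)) ≤ 0 :=
                  mul_nonpos_of_nonpos_of_nonneg (by linarith) hsq
                linarith
            _ = C := by ring
        linarith [hmain]
    have h0le : g t ≤ g 0 := hanti Set.self_mem_Ici ht ht
    have hg0 : g 0 = (θ - αd)^2 := by
      simp [hgdef, hinit θ hθ]
    have hθb : (θ - αd)^2 ≤ π^2 := by
      have h1 := hθ; rw [Set.mem_Ico] at h1
      nlinarith [h1.1, h1.2]
    have hgt : g t = (γ t θ - αd)^2 * exp (lam*t) - C*t := rfl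
    have hfin2 : (γ t θ - αd)^2 * exp (lam*t) ≤ π^2 + C*t := by
      rw [hg0] at h0le; rw [hgt] at h0le; linarith
    calc (γ t θ - αd)^2
        = ((γ t θ - αd)^2 * exp (lam*t)) * exp (-lam*t) := by
          rw [mul_assoc, ← Real.exp_add]; norm_num
      _ ≤ (π^2 + C*t) * exp (-lam*t) :=
          mul_le_mul_of_nonneg_right hfin2 (Real.exp_pos _).le
  -- the uniform bound function
  set B : ℝ → ℝ := fun t => Real.sqrt ((π^2 + C*t) * exp (-lam*t)) with hBdef
  have habs : ∀ t, 0 ≤ t → ∀ θ ∈ Set.Ico (-π + αd) (π + αd), |γ t θ - αd| ≤ B t := by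
    intro t ht θ hθ
    rw [hBdef, ← Real.sqrt_sq_eq_abs]
    exact Real.sqrt_le_sqrt (hchar θ hθ t ht)
  have hMle : ∀ t, 0 ≤ t → ∫ θ, |γ t θ - αd| ∂f₀ ≤ ρ * B t := by
    intro t ht
    have hint : Integrable (fun θ => |γ t θ - αd|) f₀ := by
      refine (integrable_const (B t)).mono'
        (((hmeas t).sub measurable_const).abs).aestronglyMeasurable ?_
      filter_upwards [haeI] with θ hθ
      rw [Real.norm_eq_abs, abs_abs]
      exact habs t ht θ hθ
    have h1 : ∫ θ, |γ t θ - αd| ∂f₀ ≤ ∫ _θ, B t ∂f₀ := by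
      apply integral_mono_ae hint (integrable_const _)
      filter_upwards [haeI] with θ hθ using habs t ht θ hθ
    rwa [integral_const, measureReal_def, hmassr, smul_eq_mul] at h1
  constructor
  · intro t _
    exact integral_map (hmeas t).aemeasurable
      ((continuous_abs.comp (continuous_id.sub continuous_const)).aestronglyMeasurable)
  · -- the limit
    have h1 : Tendsto (fun t : ℝ => lam*t) atTop atTop :=
      Tendsto.const_mul_atTop hlam0 tendsto_id
    have h2 : Tendsto (fun t : ℝ => exp (-lam*t)) atTop (nhds 0) := by
      have h2a := tendsto_exp_neg_atTop_nhds_zero.comp h1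
      simp only [Function.comp_def] at h2a
      simpa [neg_mul] using h2a
    have h3 : Tendsto (fun t : ℝ => (lam*t) * exp (-(lam*t))) atTop (nhds 0) := by
      have h3a := (tendsto_pow_mul_exp_neg_atTop_nhds_zero 1).comp h1
      simp only [Function.comp_def] at h3a
      simpa using h3a
    have h4 : Tendsto (fun t : ℝ => (π^2 + C*t) * exp (-lam*t)) atTop (nhds 0) := by
      have hA := h2.const_mul (π^2)
      have hB' := h3.const_mul (C/lam)
      have hsum := hA.add hB'
      norm_num at hsum
      refine hsum.congr fun t => ?_
      have : C/lam * (lam*t*exp (-(lam*t))) = C*t*exp (-lam*t) := by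
        rw [neg_mul]
        field_simp
      rw [this]
      ring
    have hB0 : Tendsto B atTop (nhds 0) := by
      have := h4.sqrt
      simpa [hBdef, Real.sqrt_zero] using this
    have hfinal : Tendsto (fun t => ρ * B t) atTop (nhds 0) := by
      have h5 := hB0.const_mul ρ
      rw [mul_zero] at h5
      exact h5
    exact squeeze_zero'
      (Eventually.of_forall fun t => integral_nonneg fun θ => abs_nonneg _)
      ((eventually_ge_atTop 0).mono hMle) hfinal
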